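/- Let G=(V,E,w) be a weighted (dissimilarity) graph on n vertices and ε > 0. Call a cluster tree T a recursive ε-locally-densest-cut tree for G if either |V| = 1, or the cut (V(A),V(B)) induced by the two children A,B of the root is an ε/|V|-locally-densest cut of G, and the subtrees rooted at A and B are recursive ε-locally-densest-cut trees for G[V(A)] and G[V(B)] respectively. Then every recursive ε-locally-densest-cut tree T satisfies val(T) ≥ (2n/3)·(1−ε)·Σ_{e∈E} w(e) ≥ (2/3)·(1−ε)·OPT. -/

import Mathlib

open scoped BigOperators

attribute [local instance] Classical.propDecidable

noncomputable section

/-! ### Cluster trees -/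

/-- A (binary, rooted) hierarchical-clustering tree whose leaves are labelled by
vertices of `V`. -/
inductive ClusterTree (V : Type) : Type where
  | leaf : V → ClusterTree V
  | node : ClusterTree V → ClusterTree V → ClusterTree V

namespace ClusterTree

variable {V : Type}

/-- The list of leaf labels of the tree (left-to-right). -/
def leavesList : ClusterTree V → List V
  | leaf v => [v]
  | node L R => leavesList L ++ leavesList R

/-- The set of leaf labels of the tree. -/
def leaves [DecidableEq V] (T : ClusterTree V) : Finset V :=
  T.leavesList.toFinset

end ClusterTree

section Defs

variable {V : Type}

/-- `T` is a cluster tree for the whole (finite) vertex set `V`: its leaves are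
pairwise distinct and exhaust the vertices. -/
def IsClusterTree [DecidableEq V] [Fintype V] (T : ClusterTree V) : Prop :=
  T.leavesList.Nodup ∧ T.leaves = Finset.univ

/-- `IsSubtreeOf s T` : `s` occurs as a rooted subtree of `T`. -/
def IsSubtreeOf : ClusterTree V → ClusterTree V → Prop
  | s, ClusterTree.leaf v => s = ClusterTree.leaf v
  | s, ClusterTree.node L R => s = ClusterTree.node L R ∨ IsSubtreeOf s L ∨ IsSubtreeOf s R

/-- The subtree of `T` rooted at the lowest common ancestor of the leaves `x` and `y`. -/
def lcaSubtree [DecidableEq V] : ClusterTree V → V → V → ClusterTree V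
  | ClusterTree.leaf v, _, _ => ClusterTree.leaf v
  | ClusterTree.node L R, x, y =>
    if x ∈ L.leaves ∧ y ∈ L.leaves then lcaSubtree L x y
    else if x ∈ R.leaves ∧ y ∈ R.leaves then lcaSubtree R x y
    else ClusterTree.node L R

/-- `w(A, B) = ∑_{a ∈ A, b ∈ B} w a b`. -/
def cutWeight (w : V → V → ℝ) (A B : Finset V) : ℝ := ∑ a ∈ A, ∑ b ∈ B, w a b

/-- `w(A) = ∑_{a, b ∈ A} w a b` (ordered pairs; each edge counted twice). -/
def innerWeight (w : V → V → ℝ) (A : Finset V) : ℝ := ∑ a ∈ A, ∑ b ∈ A, w a b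

/-- `∑_{e ∈ E} w(e)`, for a symmetric weight function with zero diagonal. -/
def totalWeight [Fintype V] (w : V → V → ℝ) : ℝ := (∑ u : V, ∑ v : V, w u v) / 2

/-- Cost of a cluster tree: each internal node `N` with children `N₁, N₂`
contributes `w(V(N₁), V(N₂)) · g(|V(N₁)|, |V(N₂)|)`. -/
def treeCost [DecidableEq V] (w : V → V → ℝ) (g : ℕ → ℕ → ℝ) : ClusterTree V → ℝ
  | ClusterTree.leaf _ => 0
  | ClusterTree.node L R =>
      cutWeight w L.leaves R.leaves * g L.leaves.card R.leaves.card
        + treeCost w g L + treeCost w g R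

/-- Dasgupta's cost (= `treeCost` with `g (a, b) = a + b`). -/
def dasguptaCost [DecidableEq V] (w : V → V → ℝ) : ClusterTree V → ℝ
  | ClusterTree.leaf _ => 0
  | ClusterTree.node L R =>
      ((L.leaves.card + R.leaves.card : ℕ) : ℝ) * cutWeight w L.leaves R.leaves
        + dasguptaCost w L + dasguptaCost w R

/-! ### Generating trees -/

/-- `T` is a generating tree for the similarity graph `w` : there is a nonnegative
weight function on the internal nodes, non-increasing from leaves towards the root,
realizing every edge weight at the corresponding LCA. -/
def IsGenerating [DecidableEq V] (w : V → V → ℝ) (T : ClusterTree V) : Prop :=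
  ∃ W : ClusterTree V → ℝ,
    (∀ s, IsSubtreeOf s T → 0 ≤ W s) ∧
    (∀ L R, IsSubtreeOf (ClusterTree.node L R) T →
      ∀ s, IsSubtreeOf s L ∨ IsSubtreeOf s R → W (ClusterTree.node L R) ≤ W s) ∧
    (∀ x y, x ∈ T.leaves → y ∈ T.leaves → x ≠ y → w x y = W (lcaSubtree T x y))

/-- Generating tree in the dissimilarity setting (weights non-decreasing from
leaves towards the root). -/
def IsGeneratingDissim [DecidableEq V] (w : V → V → ℝ) (T : ClusterTree V) : Prop :=
  ∃ W : ClusterTree V → ℝ,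
    (∀ s, IsSubtreeOf s T → 0 ≤ W s) ∧
    (∀ L R, IsSubtreeOf (ClusterTree.node L R) T →
      ∀ s, IsSubtreeOf s L ∨ IsSubtreeOf s R → W s ≤ W (ClusterTree.node L R)) ∧
    (∀ x y, x ∈ T.leaves → y ∈ T.leaves → x ≠ y → w x y = W (lcaSubtree T x y))

/-- Strictly generating tree (similarity setting). -/
def IsStrictlyGenerating [DecidableEq V] (w : V → V → ℝ) (T : ClusterTree V) : Prop :=
  ∃ W : ClusterTree V → ℝ,
    (∀ s, IsSubtreeOf s T → 0 ≤ W s) ∧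
    (∀ L R, IsSubtreeOf (ClusterTree.node L R) T →
      ∀ s, IsSubtreeOf s L ∨ IsSubtreeOf s R → W (ClusterTree.node L R) < W s) ∧
    (∀ x y, x ∈ T.leaves → y ∈ T.leaves → x ≠ y → w x y = W (lcaSubtree T x y))

/-- Strictly generating tree (dissimilarity setting). -/
def IsStrictlyGeneratingDissim [DecidableEq V] (w : V → V → ℝ) (T : ClusterTree V) : Prop :=
  ∃ W : ClusterTree V → ℝ,
    (∀ s, IsSubtreeOf s T → 0 ≤ W s) ∧
    (∀ L R, IsSubtreeOf (ClusterTree.node L R) T →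
      ∀ s, IsSubtreeOf s L ∨ IsSubtreeOf s R → W s < W (ClusterTree.node L R)) ∧
    (∀ x y, x ∈ T.leaves → y ∈ T.leaves → x ≠ y → w x y = W (lcaSubtree T x y))

/-! ### Ultrametrics and ground-truth inputs -/

/-- `d` is an ultrametric on `V`. -/
def IsUltrametric (d : V → V → ℝ) : Prop :=
  (∀ x, d x x = 0) ∧ (∀ x y, d x y = 0 → x = y) ∧ (∀ x y, d x y = d y x) ∧
  (∀ x y, 0 ≤ d x y) ∧ (∀ x y z, d x y ≤ max (d x z) (d y z))

/-- `w` is a similarity graph generated from an ultrametric via a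
non-increasing nonnegative function `f`. -/
def GeneratedFromUltrametric (w : V → V → ℝ) : Prop :=
  ∃ (d : V → V → ℝ) (f : ℝ → ℝ),
    IsUltrametric d ∧
    (∀ a b : ℝ, 0 ≤ a → a ≤ b → f b ≤ f a) ∧
    (∀ a : ℝ, 0 ≤ a → 0 ≤ f a) ∧
    (∀ x y : V, x ≠ y → w x y = f (d x y))

/-- `w` is a dissimilarity graph generated from an ultrametric via a
non-decreasing nonnegative function `f`. -/
def GeneratedFromUltrametricDissim (w : V → V → ℝ) : Prop :=
  ∃ (d : V → V → ℝ) (f : ℝ → ℝ),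
    IsUltrametric d ∧
    (∀ a b : ℝ, 0 ≤ a → a ≤ b → f a ≤ f b) ∧
    (∀ a : ℝ, 0 ≤ a → 0 ≤ f a) ∧
    (∀ x y : V, x ≠ y → w x y = f (d x y))

/-- `w` is a similarity graph generated from a *minimal* ultrametric:
pairs with equal weights are at equal ultrametric distance. -/
def GeneratedFromMinimalUltrametric (w : V → V → ℝ) : Prop :=
  ∃ (d : V → V → ℝ) (f : ℝ → ℝ),
    IsUltrametric d ∧
    (∀ a b : ℝ, 0 ≤ a → a ≤ b → f b ≤ f a) ∧
    (∀ a : ℝ, 0 ≤ a → 0 ≤ f a) ∧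
    (∀ x y : V, x ≠ y → w x y = f (d x y)) ∧
    (∀ u v u' v' : V, u ≠ v → u' ≠ v' → f (d u v) = f (d u' v') → d u v = d u' v')

/-- Dissimilarity analogue of `GeneratedFromMinimalUltrametric`. -/
def GeneratedFromMinimalUltrametricDissim (w : V → V → ℝ) : Prop :=
  ∃ (d : V → V → ℝ) (f : ℝ → ℝ),
    IsUltrametric d ∧
    (∀ a b : ℝ, 0 ≤ a → a ≤ b → f a ≤ f b) ∧
    (∀ a : ℝ, 0 ≤ a → 0 ≤ f a) ∧
    (∀ x y : V, x ≠ y → w x y = f (d x y)) ∧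
    (∀ u v u' v' : V, u ≠ v → u' ≠ v' → f (d u v) = f (d u' v') → d u v = d u' v')

/-- `w` is a `δ`-adversarially-perturbed (similarity) ground-truth input. -/
def IsDeltaPerturbedGroundTruth (w : V → V → ℝ) (δ : ℝ) : Prop :=
  ∃ (d : V → V → ℝ) (f : ℝ → ℝ),
    IsUltrametric d ∧
    (∀ a b : ℝ, 0 ≤ a → a ≤ b → f b ≤ f a) ∧
    (∀ a : ℝ, 0 ≤ a → 0 ≤ f a) ∧
    (∀ x y : V, x ≠ y → f (d x y) ≤ w x y ∧ w x y ≤ δ * f (d x y))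

end Defs

/-- The unit-weight clique on `V`. -/
def cliqueW (V : Type) [DecidableEq V] : V → V → ℝ := fun x y => if x = y then 0 else 1

/-- Admissibility of a cost function (similarity setting): on every similarity graph
generated from a minimal ultrametric, a cluster tree minimizes the cost
iff it is a generating tree. -/
def Admissible (g : ℕ → ℕ → ℝ) : Prop :=
  ∀ (V : Type) [Fintype V] [DecidableEq V] (w : V → V → ℝ),
    GeneratedFromMinimalUltrametric w →
    ∀ T : ClusterTree V, IsClusterTree T →
      ((∀ T' : ClusterTree V, IsClusterTree T' → treeCost w g T ≤ treeCost w g T')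
        ↔ IsGenerating w T)

/-- Admissibility of a value function (dissimilarity setting): on every dissimilarity
graph generated from a minimal ultrametric, a cluster tree maximizes the value
iff it is a generating tree. -/
def AdmissibleDissim (g : ℕ → ℕ → ℝ) : Prop :=
  ∀ (V : Type) [Fintype V] [DecidableEq V] (w : V → V → ℝ),
    GeneratedFromMinimalUltrametricDissim w →
    ∀ T : ClusterTree V, IsClusterTree T →
      ((∀ T' : ClusterTree V, IsClusterTree T' → treeCost w g T' ≤ treeCost w g T)
        ↔ IsGeneratingDissim w T)

/-! ### Agglomerative (linkage) algorithms, modelled as a nondeterministic relation -/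

/-- The initial state of an agglomerative algorithm: all singleton trees. -/
def initState (V : Type) [Fintype V] : Multiset (ClusterTree V) :=
  Finset.univ.val.map ClusterTree.leaf

/-- One merge step of a generic linkage algorithm: merge two candidate trees whose
leaf-set distance `D` is best (w.r.t. `better a b` = "`a` is at least as good as `b`")
among all candidate pairs; any tie-breaking choice is allowed. -/
inductive MergeStep {V : Type} [DecidableEq V] (D : Finset V → Finset V → ℝ)
    (better : ℝ → ℝ → Prop) :
    Multiset (ClusterTree V) → Multiset (ClusterTree V) → Prop where
  | step : ∀ (rest : Multiset (ClusterTree V)) (T1 T2 : ClusterTree V),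
      (∀ (T1' T2' : ClusterTree V) (rest' : Multiset (ClusterTree V)),
          T1 ::ₘ T2 ::ₘ rest = T1' ::ₘ T2' ::ₘ rest' →
          better (D T1.leaves T2.leaves) (D T1'.leaves T2'.leaves)) →
      MergeStep D better (T1 ::ₘ T2 ::ₘ rest) (ClusterTree.node T1 T2 ::ₘ rest)

/-- `T` is a possible output of the linkage algorithm with dissimilarity/similarity
measure `D` and preference `better`. -/
def IsLinkageOutput {V : Type} [Fintype V] [DecidableEq V]
    (D : Finset V → Finset V → ℝ) (better : ℝ → ℝ → Prop) (T : ClusterTree V) : Prop :=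
  Relation.ReflTransGen (MergeStep D better) (initState V) {T}

/-- Average-linkage measure. -/
def avgDist {V : Type} (w : V → V → ℝ) (A B : Finset V) : ℝ :=
  cutWeight w A B / ((A.card : ℝ) * (B.card : ℝ))

/-- Single-linkage measure: `min_{x ∈ A, y ∈ B} w x y`. -/
def minLinkDist {V : Type} [DecidableEq V] (w : V → V → ℝ) (A B : Finset V) : ℝ :=
  WithTop.untopD 0 (((A ×ˢ B).image fun p => w p.1 p.2).min)

/-- Complete-linkage measure: `max_{x ∈ A, y ∈ B} w x y`. -/
def maxLinkDist {V : Type} [DecidableEq V] (w : V → V → ℝ) (A B : Finset V) : ℝ :=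
  WithBot.unbotD 0 (((A ×ˢ B).image fun p => w p.1 p.2).max)

/-! ### Cuts -/

section Cuts

variable {V : Type}

/-- `A ⊕ x` : add `x` to `A` if absent, remove it if present. -/
def symmDiffV [DecidableEq V] (A : Finset V) (x : V) : Finset V :=
  if x ∈ A then A.erase x else insert x A

/-- `(A, B)` is an `ε/|A ∪ B|`-locally-densest cut of the induced subgraph on `A ∪ B`. -/
def IsLocallyDensestCut [DecidableEq V] (w : V → V → ℝ) (ε : ℝ) (A B : Finset V) : Prop :=
  ∀ x ∈ A ∪ B,
    cutWeight w (symmDiffV A x) (symmDiffV B x) /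
        (((symmDiffV A x).card : ℝ) * ((symmDiffV B x).card : ℝ)) ≤
      (1 + ε / ((A ∪ B).card : ℝ)) *
        (cutWeight w A B / ((A.card : ℝ) * (B.card : ℝ)))

/-- Cluster trees obtained by recursively splitting along `ε/n`-locally-densest cuts. -/
def IsRecLocallyDensestCutTree [DecidableEq V] (w : V → V → ℝ) (ε : ℝ) :
    ClusterTree V → Prop
  | ClusterTree.leaf _ => True
  | ClusterTree.node L R =>
      IsLocallyDensestCut w ε L.leaves R.leaves ∧
      IsRecLocallyDensestCutTree w ε L ∧ IsRecLocallyDensestCutTree w ε R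

/-- Cluster trees obtained by recursively splitting along `φ`-approximate sparsest cuts. -/
def IsRecApproxSparsestCutTree [DecidableEq V] (w : V → V → ℝ) (φ : ℝ) :
    ClusterTree V → Prop
  | ClusterTree.leaf _ => True
  | ClusterTree.node L R =>
      (∀ S : Finset V, S ⊆ L.leaves ∪ R.leaves → S.Nonempty → S ⊂ L.leaves ∪ R.leaves →
        cutWeight w L.leaves R.leaves / ((L.leaves.card : ℝ) * (R.leaves.card : ℝ)) ≤
          φ * (cutWeight w S ((L.leaves ∪ R.leaves) \ S) /
            ((S.card : ℝ) * (((L.leaves ∪ R.leaves) \ S).card : ℝ)))) ∧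
      IsRecApproxSparsestCutTree w φ L ∧ IsRecApproxSparsestCutTree w φ R

/-- Cluster trees obtained by recursively splitting along exact sparsest cuts. -/
def IsRecSparsestCutTree [DecidableEq V] (w : V → V → ℝ) : ClusterTree V → Prop
  | ClusterTree.leaf _ => True
  | ClusterTree.node L R =>
      (∀ S : Finset V, S ⊆ L.leaves ∪ R.leaves → S.Nonempty → S ⊂ L.leaves ∪ R.leaves →
        cutWeight w L.leaves R.leaves / ((L.leaves.card : ℝ) * (R.leaves.card : ℝ)) ≤
          cutWeight w S ((L.leaves ∪ R.leaves) \ S) /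
            ((S.card : ℝ) * (((L.leaves ∪ R.leaves) \ S).card : ℝ))) ∧
      IsRecSparsestCutTree w L ∧ IsRecSparsestCutTree w R

/-- Cluster trees obtained by recursively splitting along exact densest cuts. -/
def IsRecDensestCutTree [DecidableEq V] (w : V → V → ℝ) : ClusterTree V → Prop
  | ClusterTree.leaf _ => True
  | ClusterTree.node L R =>
      (∀ S : Finset V, S ⊆ L.leaves ∪ R.leaves → S.Nonempty → S ⊂ L.leaves ∪ R.leaves →
        cutWeight w S ((L.leaves ∪ R.leaves) \ S) /
            ((S.card : ℝ) * (((L.leaves ∪ R.leaves) \ S).card : ℝ)) ≤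
          cutWeight w L.leaves R.leaves / ((L.leaves.card : ℝ) * (R.leaves.card : ℝ))) ∧
      IsRecDensestCutTree w L ∧ IsRecDensestCutTree w R

/-- Cluster trees produced by the bisection 2-Center algorithm (similarity setting). -/
def IsBisection2CenterTree [DecidableEq V] (w : V → V → ℝ) : ClusterTree V → Prop
  | ClusterTree.leaf _ => True
  | ClusterTree.node L R =>
      (∃ u ∈ L.leaves ∪ R.leaves, ∃ v ∈ L.leaves ∪ R.leaves, u ≠ v ∧
        (∃ r : ℝ,
          (∀ x ∈ L.leaves ∪ R.leaves, r ≤ max (w x u) (w x v)) ∧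
          (∀ u' ∈ L.leaves ∪ R.leaves, ∀ v' ∈ L.leaves ∪ R.leaves, u' ≠ v' →
            ∃ x ∈ L.leaves ∪ R.leaves, max (w x u') (w x v') ≤ r)) ∧
        L.leaves = (L.leaves ∪ R.leaves).filter fun x => w x v ≤ w x u) ∧
      IsBisection2CenterTree w L ∧ IsBisection2CenterTree w R

/-- Cluster trees produced by the bisection 2-Center algorithm (dissimilarity setting). -/
def IsBisection2CenterTreeDissim [DecidableEq V] (w : V → V → ℝ) : ClusterTree V → Prop
  | ClusterTree.leaf _ => True
  | ClusterTree.node L R =>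
      (∃ u ∈ L.leaves ∪ R.leaves, ∃ v ∈ L.leaves ∪ R.leaves, u ≠ v ∧
        (∃ r : ℝ,
          (∀ x ∈ L.leaves ∪ R.leaves, min (w x u) (w x v) ≤ r) ∧
          (∀ u' ∈ L.leaves ∪ R.leaves, ∀ v' ∈ L.leaves ∪ R.leaves, u' ≠ v' →
            ∃ x ∈ L.leaves ∪ R.leaves, r ≤ min (w x u') (w x v'))) ∧
        L.leaves = (L.leaves ∪ R.leaves).filter fun x => w x u ≤ w x v) ∧
      IsBisection2CenterTreeDissim w L ∧ IsBisection2CenterTreeDissim w R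

end Cuts

/-! ### Pivot algorithms -/

mutual
/-- Trees produced by the fast pivot algorithm (Algorithm 6 of CKMM):
pick a pivot `p`, split the other vertices into classes of equal similarity to `p`
(in strictly decreasing order of similarity), recurse, and attach along a spine. -/
inductive IsPivotTree {V : Type} [DecidableEq V] (w : V → V → ℝ) : ClusterTree V → Prop where
  | mk : ∀ (p : V) (T : ClusterTree V), PivotSpine w p T → IsPivotTree w T

/-- The spine of the pivot algorithm: `PivotSpine w p T` says that `T` is an iterated
union of the single-vertex tree on `p` with pivot trees of the similarity classes of
`p`, attached in strictly decreasing order of similarity to `p`. -/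
inductive PivotSpine {V : Type} [DecidableEq V] (w : V → V → ℝ) : V → ClusterTree V → Prop where
  | base : ∀ p : V, PivotSpine w p (ClusterTree.leaf p)
  | step : ∀ (p : V) (S T : ClusterTree V) (c : ℝ),
      PivotSpine w p S → IsPivotTree w T →
      (∀ v ∈ T.leaves, w p v = c) →
      (∀ u ∈ S.leaves, u ≠ p → c < w p u) →
      PivotSpine w p (ClusterTree.node S T)
end

mutual
/-- Trees produced by the robust pivot algorithm (Algorithm 7 of CKMM). -/
inductive IsRobustPivotTree {V : Type} [DecidableEq V] (w : V → V → ℝ) :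
    ClusterTree V → Prop where
  | mk : ∀ (p : V) (T : ClusterTree V), RobustPivotSpine w T.leaves p T →
      IsRobustPivotTree w T

/-- `RobustPivotSpine w U p T` : `T` is a prefix (a spine) of a run of the robust pivot
algorithm on the vertex set `U`, started at the pivot `p`.  At each step, `wi` is the
maximum weight of an edge in the cut `(Ṽ, U \ Ṽ)` (where `Ṽ` is the set of already
clustered vertices), and the next block is the least subset of `U \ Ṽ` closed under
adding any vertex having an edge of weight at least `wi` into the block or into `Ṽ`. -/
inductive RobustPivotSpine {V : Type} [DecidableEq V] (w : V → V → ℝ) :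
    Finset V → V → ClusterTree V → Prop where
  | base : ∀ (U : Finset V) (p : V), RobustPivotSpine w U p (ClusterTree.leaf p)
  | step : ∀ (U : Finset V) (p : V) (S T : ClusterTree V) (wi : ℝ),
      RobustPivotSpine w U p S →
      IsRobustPivotTree w T →
      (∃ p1 ∈ S.leaves, ∃ p2 ∈ U \ S.leaves, w p1 p2 = wi) →
      (∀ q1 ∈ S.leaves, ∀ q2 ∈ U \ S.leaves, w q1 q2 ≤ wi) →
      T.leaves ⊆ U \ S.leaves →
      (∀ u ∈ U \ S.leaves, (∃ v ∈ T.leaves ∪ S.leaves, wi ≤ w u v) → u ∈ T.leaves) →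
      (∀ C : Finset V, C ⊆ U \ S.leaves →
        (∀ u ∈ U \ S.leaves, (∃ v ∈ C ∪ S.leaves, wi ≤ w u v) → u ∈ C) →
        T.leaves ⊆ C) →
      RobustPivotSpine w U p (ClusterTree.node S T)
end

/-! ### Paths and caterpillars -/

/-- Attach the leaves from the list `l` one by one on top of `t` (a "spine"). -/
def spineTree {V : Type} : ClusterTree V → List V → ClusterTree V
  | t, [] => t
  | t, v :: vs => spineTree (ClusterTree.node t (ClusterTree.leaf v)) vs

/-- The unit-weight path on `n` vertices. -/
def pathW (n : ℕ) (i j : Fin n) : ℝ :=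
  if (i : ℕ) + 1 = (j : ℕ) ∨ (j : ℕ) + 1 = (i : ℕ) then 1 else 0

/-! ### Random graphs: hierarchical stochastic block model -/

/-- Index set for the potential edges of a graph on `Fin n`. -/
abbrev EdgeIdx (n : ℕ) := {p : Fin n × Fin n // p.1 < p.2}

/-- The (0/1) weight function of the random graph described by the edge
configuration `c`. -/
def configW {n : ℕ} (c : EdgeIdx n → Bool) (u v : Fin n) : ℝ :=
  if h : u < v then (if c ⟨(u, v), h⟩ then 1 else 0)
  else if h' : v < u then (if c ⟨(v, u), h'⟩ then 1 else 0)
  else 0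

/-- The probability of the edge configuration `c` when each edge `e` is present
independently with probability `q e`. -/
def configProb {n : ℕ} (q : Fin n → Fin n → ℝ) (c : EdgeIdx n → Bool) : ℝ :=
  ∏ e : EdgeIdx n, if c e then q e.val.1 e.val.2 else 1 - q e.val.1 e.val.2

/-- The expected cost `E[Γ(T) | ψ]` of a fixed cluster tree `T`, over the random
choice of the edges (with edge probabilities `q`). -/
def expectedCost {n : ℕ} (g : ℕ → ℕ → ℝ) (q : Fin n → Fin n → ℝ)
    (T : ClusterTree (Fin n)) : ℝ :=
  ∑ c : EdgeIdx n → Bool, configProb q c * treeCost (configW c) g T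

/-- The (fixed, size-independent) data of a hierarchical stochastic block model with
`k` bottom-level clusters: a generating tree `Ttil` with weights `Wtil` in `(0,1)`
(the graph `G̃ₖ` on `k` vertices generated from an ultrametric), and intra-cluster
probabilities `p i ∈ (0,1]` exceeding the weight of the parent of leaf `i`. -/
structure HSBM (k : ℕ) where
  Ttil : ClusterTree (Fin k)
  Wtil : ClusterTree (Fin k) → ℝ
  p : Fin k → ℝ
  ttil_isClusterTree : IsClusterTree Ttil
  wtil_pos : ∀ L R, IsSubtreeOf (ClusterTree.node L R) Ttil →
    0 < Wtil (ClusterTree.node L R)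
  wtil_lt_one : ∀ L R, IsSubtreeOf (ClusterTree.node L R) Ttil →
    Wtil (ClusterTree.node L R) < 1
  wtil_mono : ∀ L R, IsSubtreeOf (ClusterTree.node L R) Ttil →
    ∀ s, IsSubtreeOf s L ∨ IsSubtreeOf s R → Wtil (ClusterTree.node L R) ≤ Wtil s
  p_pos : ∀ i, 0 < p i
  p_le_one : ∀ i, p i ≤ 1
  p_gt_parent : ∀ L R, IsSubtreeOf (ClusterTree.node L R) Ttil →
    ∀ i : Fin k, L = ClusterTree.leaf i ∨ R = ClusterTree.leaf i →
      Wtil (ClusterTree.node L R) < p i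

/-- The edge probabilities of the HSBM `M` with sparsity `α`, given the assignment
`ψ` of vertices to bottom-level clusters.  These are also the edge weights of the
expected graph `Ḡ`. -/
def HSBM.edgeProb {k : ℕ} (M : HSBM k) (α : ℝ) {n : ℕ} (ψ : Fin n → Fin k) :
    Fin n → Fin n → ℝ := fun u v =>
  if ψ u = ψ v then α * M.p (ψ u)
  else α * M.Wtil (lcaSubtree M.Ttil (ψ u) (ψ v))

/-- The probability of the sample `ω = (ψ, c)` (labels and edges) of the HSBM `M`
with label proportions `f` and sparsity `α`. -/
def hsbmProb {k : ℕ} (M : HSBM k) (f : Fin k → ℝ) (α : ℝ) {n : ℕ}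
    (ω : (Fin n → Fin k) × (EdgeIdx n → Bool)) : ℝ :=
  (∏ v : Fin n, f (ω.1 v)) * configProb (M.edgeProb α ω.1) ω.2

/-- The common cost `κ(n)` of all cluster trees of the unit-weight clique on `n`
vertices (computed on the caterpillar tree). -/
def cliqueTreeCost (g : ℕ → ℕ → ℝ) (n : ℕ) : ℝ :=
  ∑ i ∈ Finset.range n, (i : ℝ) * g i 1

/-- The smoothness property: `max {g(n₁,n₂) : n₁+n₂ = n} = O(κ(n)/n²)`. -/
def SmoothCost (g : ℕ → ℕ → ℝ) : Prop :=
  ∃ C : ℝ, 0 < C ∧ ∀ n1 n2 : ℕ, 1 ≤ n1 → 1 ≤ n2 →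
    g n1 n2 * (((n1 + n2 : ℕ) : ℝ)) ^ 2 ≤ C * cliqueTreeCost g (n1 + n2)

end

section Statement7Aux

variable {V : Type} [DecidableEq V]

lemma ct_leaves_node (L R : ClusterTree V) :
    (ClusterTree.node L R).leaves = L.leaves ∪ R.leaves := by
  simp [ClusterTree.leaves, ClusterTree.leavesList]

lemma ct_leaves_nonempty : ∀ s : ClusterTree V, s.leaves.Nonempty
  | ClusterTree.leaf v => ⟨v, by simp [ClusterTree.leaves, ClusterTree.leavesList]⟩
  | ClusterTree.node L R => by
      rw [ct_leaves_node]; exact (ct_leaves_nonempty L).inl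

lemma cutWeight_nonneg (w : V → V → ℝ) (hnn : ∀ u v, 0 ≤ w u v) (A B : Finset V) :
    0 ≤ cutWeight w A B :=
  Finset.sum_nonneg fun a _ => Finset.sum_nonneg fun b _ => hnn a b

lemma innerWeight_nonneg (w : V → V → ℝ) (hnn : ∀ u v, 0 ≤ w u v) (A : Finset V) :
    0 ≤ innerWeight w A :=
  Finset.sum_nonneg fun a _ => Finset.sum_nonneg fun b _ => hnn a b

lemma cutWeight_comm (w : V → V → ℝ) (hsym : ∀ u v, w u v = w v u) (A B : Finset V) :
    cutWeight w A B = cutWeight w B A := by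
  unfold cutWeight
  rw [Finset.sum_comm]
  exact Finset.sum_congr rfl fun b _ => Finset.sum_congr rfl fun a _ => hsym a b

lemma innerWeight_union (w : V → V → ℝ) (hsym : ∀ u v, w u v = w v u)
    {A B : Finset V} (hd : Disjoint A B) :
    innerWeight w (A ∪ B) = innerWeight w A + innerWeight w B + 2 * cutWeight w A B := by
  unfold innerWeight
  rw [Finset.sum_union hd]
  have h1 : ∀ a : V, ∑ b ∈ A ∪ B, w a b = (∑ b ∈ A, w a b) + ∑ b ∈ B, w a b :=
    fun a => Finset.sum_union hd
  simp only [h1, Finset.sum_add_distrib]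
  have h2 : (∑ a ∈ B, ∑ b ∈ A, w a b) = ∑ a ∈ A, ∑ b ∈ B, w a b :=
    (cutWeight_comm w hsym B A : cutWeight w B A = cutWeight w A B)
  rw [h2]
  unfold cutWeight
  ring

lemma ldc_symm (w : V → V → ℝ) (hsym : ∀ u v, w u v = w v u) {ε : ℝ} {A B : Finset V}
    (h : IsLocallyDensestCut w ε A B) : IsLocallyDensestCut w ε B A := by
  intro x hx
  have h' := h x (by rwa [Finset.union_comm])
  rw [cutWeight_comm w hsym B A, cutWeight_comm w hsym (symmDiffV B x) (symmDiffV A x),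
    Finset.union_comm B A, mul_comm ((B.card : ℝ)), mul_comm (((symmDiffV B x).card : ℝ))]
  exact h'

/-- Key inequality for a locally densest cut. -/
lemma key_ineq (w : V → V → ℝ) (hsym : ∀ u v, w u v = w v u)
    (hnonneg : ∀ u v, 0 ≤ w u v) (hdiag : ∀ v, w v v = 0)
    (ε : ℝ) (hε : 0 < ε) (A B : Finset V) (hA : A.Nonempty) (hB : B.Nonempty)
    (hd : Disjoint A B) (h : IsLocallyDensestCut w ε A B) :
    (B.card : ℝ) * innerWeight w A ≤ ((A.card : ℝ) - 1) * (1 + ε) * cutWeight w A B := by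
  rcases Nat.lt_or_ge A.card 2 with h2 | h2
  · -- |A| = 1
    have h1 : A.card = 1 := by
      have := hA.card_pos; omega
    obtain ⟨x, hx⟩ := Finset.card_eq_one.mp h1
    have hiA : innerWeight w A = 0 := by
      subst hx; simp [innerWeight, hdiag]
    rw [hiA, h1]
    norm_num
  · -- |A| ≥ 2
    have ha2 : (2 : ℝ) ≤ (A.card : ℝ) := by exact_mod_cast h2
    have hb1 : (1 : ℝ) ≤ (B.card : ℝ) := by exact_mod_cast hB.card_pos
    set a : ℝ := (A.card : ℝ) with ha_def
    set b : ℝ := (B.card : ℝ) with hb_def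
    set c : ℝ := cutWeight w A B with hc_def
    have hc0 : 0 ≤ c := cutWeight_nonneg w hnonneg A B
    have hn : ((A ∪ B).card : ℝ) = a + b := by
      rw [Finset.card_union_of_disjoint hd]; push_cast; ring
    -- per-vertex bound
    have hx : ∀ x ∈ A, cutWeight w (A.erase x) (insert x B) ≤
        (1 + ε / (a + b)) * (c / (a * b)) * ((a - 1) * (b + 1)) := by
      intro x hxA
      have hxB : x ∉ B := Finset.disjoint_left.mp hd hxA
      have h' := h x (Finset.mem_union_left _ hxA)
      simp only [symmDiffV, if_pos hxA, if_neg hxB] at h'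
      have hce : ((A.erase x).card : ℝ) = a - 1 := by
        rw [Finset.card_erase_of_mem hxA]
        have : 1 ≤ A.card := hA.card_pos
        push_cast [Nat.cast_sub this]; ring
      have hci : (((insert x B).card : ℝ)) = b + 1 := by
        rw [Finset.card_insert_of_notMem hxB]; push_cast; ring
      rw [hce, hci, hn] at h'
      have hpos : (0 : ℝ) < (a - 1) * (b + 1) := by nlinarith
      exact (div_le_iff₀ hpos).mp h'
    have hsum := Finset.sum_le_sum hx
    -- compute the LHS sum
    have hL : (∑ x ∈ A, cutWeight w (A.erase x) (insert x B))
        = innerWeight w A + (a - 1) * c := by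
      have hterm : ∀ x ∈ A, cutWeight w (A.erase x) (insert x B)
          = (∑ u ∈ A, w u x) + (c - ∑ v ∈ B, w x v) := by
        intro x hxA
        have hxB : x ∉ B := Finset.disjoint_left.mp hd hxA
        unfold cutWeight
        rw [Finset.sum_congr rfl fun u _ => Finset.sum_insert hxB,
          Finset.sum_add_distrib]
        congr 1
        · rw [Finset.sum_erase_eq_sub hxA, hdiag, sub_zero]
        · rw [Finset.sum_erase_eq_sub hxA]
          rfl
      rw [Finset.sum_congr rfl hterm, Finset.sum_add_distrib]
      have e1 : (∑ x ∈ A, ∑ u ∈ A, w u x) = innerWeight w A := by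
        unfold innerWeight; exact Finset.sum_comm
      have e2 : (∑ x ∈ A, (c - ∑ v ∈ B, w x v)) = a * c - c := by
        rw [Finset.sum_sub_distrib, Finset.sum_const, nsmul_eq_mul]
        have : (∑ x ∈ A, ∑ v ∈ B, w x v) = c := rfl
        rw [this]
      rw [e1, e2]; ring
    rw [hL, Finset.sum_const, nsmul_eq_mul] at hsum
    -- simplify the RHS
    have ha0 : (0 : ℝ) < a := by linarith
    have hb0 : (0 : ℝ) < b := by linarith
    have hRHS : a * ((1 + ε / (a + b)) * (c / (a * b)) * ((a - 1) * (b + 1)))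
        = (1 + ε / (a + b)) * c * ((a - 1) * (b + 1)) / b := by
      field_simp
    rw [hRHS] at hsum
    have key' : (innerWeight w A + (a - 1) * c) * b
        ≤ (1 + ε / (a + b)) * c * ((a - 1) * (b + 1)) :=
      (le_div_iff₀ hb0).mp hsum
    have hn0 : (0 : ℝ) < a + b := by linarith
    have he' : 0 ≤ ε / (a + b) := le_of_lt (div_pos hε hn0)
    have hstep : ε / (a + b) * (b + 1) ≤ ε := by
      rw [div_mul_eq_mul_div, div_le_iff₀ hn0]
      nlinarith
    have hprod : ε / (a + b) * (b + 1) * ((a - 1) * c) ≤ ε * ((a - 1) * c) :=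
      mul_le_mul_of_nonneg_right hstep (by nlinarith)
    nlinarith [key', hprod, innerWeight_nonneg w hnonneg A]

lemma cost_nonneg (w : V → V → ℝ) (hnonneg : ∀ u v, 0 ≤ w u v) :
    ∀ s : ClusterTree V, 0 ≤ dasguptaCost w s
  | ClusterTree.leaf _ => le_of_eq rfl
  | ClusterTree.node L R => by
      simp only [dasguptaCost]
      have h1 := cost_nonneg w hnonneg L
      have h2 := cost_nonneg w hnonneg R
      have h3 := cutWeight_nonneg w hnonneg L.leaves R.leaves
      positivity

lemma nodup_node {L R : ClusterTree V}
    (h : (ClusterTree.node L R).leavesList.Nodup) :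
    L.leavesList.Nodup ∧ R.leavesList.Nodup ∧ Disjoint L.leaves R.leaves := by
  have h' : (L.leavesList ++ R.leavesList).Nodup := h
  rw [List.nodup_append] at h'
  exact ⟨h'.1, h'.2.1, List.disjoint_toFinset_iff_disjoint.mpr (fun a ha hb => h'.2.2 a ha a hb rfl)⟩

lemma cost_upper (w : V → V → ℝ) (hsym : ∀ u v, w u v = w v u)
    (hnonneg : ∀ u v, 0 ≤ w u v) :
    ∀ s : ClusterTree V, s.leavesList.Nodup →
      dasguptaCost w s ≤ (s.leaves.card : ℝ) * innerWeight w s.leaves / 2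
  | ClusterTree.leaf v, _ => by
      simp only [dasguptaCost]
      have : 0 ≤ innerWeight w (ClusterTree.leaf v).leaves :=
        innerWeight_nonneg w hnonneg _
      positivity
  | ClusterTree.node L R, hnd => by
      obtain ⟨hndL, hndR, hd⟩ := nodup_node hnd
      have IH1 := cost_upper w hsym hnonneg L hndL
      have IH2 := cost_upper w hsym hnonneg R hndR
      have hcard : ((ClusterTree.node L R).leaves.card : ℝ)
          = (L.leaves.card : ℝ) + (R.leaves.card : ℝ) := by
        rw [ct_leaves_node, Finset.card_union_of_disjoint hd]; push_cast; ring
      have hiw : innerWeight w (ClusterTree.node L R).leaves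
          = innerWeight w L.leaves + innerWeight w R.leaves
            + 2 * cutWeight w L.leaves R.leaves := by
        rw [ct_leaves_node]; exact innerWeight_union w hsym hd
      simp only [dasguptaCost]
      rw [hcard, hiw]
      have ha1 : (1 : ℝ) ≤ (L.leaves.card : ℝ) := by
        exact_mod_cast (ct_leaves_nonempty L).card_pos
      have hb1 : (1 : ℝ) ≤ (R.leaves.card : ℝ) := by
        exact_mod_cast (ct_leaves_nonempty R).card_pos
      have hiA := innerWeight_nonneg w hnonneg L.leaves
      have hiB := innerWeight_nonneg w hnonneg R.leaves
      have hc := cutWeight_nonneg w hnonneg L.leaves R.leaves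
      push_cast
      nlinarith [mul_nonneg (by linarith : (0:ℝ) ≤ (R.leaves.card : ℝ)) hiA,
        mul_nonneg (by linarith : (0:ℝ) ≤ (L.leaves.card : ℝ)) hiB]

lemma cost_lower (w : V → V → ℝ) (hsym : ∀ u v, w u v = w v u)
    (hnonneg : ∀ u v, 0 ≤ w u v) (hdiag : ∀ v, w v v = 0)
    (ε : ℝ) (hε : 0 < ε) :
    ∀ s : ClusterTree V, s.leavesList.Nodup → IsRecLocallyDensestCutTree w ε s →
      (1 - ε) / 3 * (s.leaves.card : ℝ) * innerWeight w s.leaves ≤ dasguptaCost w s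
  | ClusterTree.leaf v, _, _ => by
      simp [ClusterTree.leaves, ClusterTree.leavesList, innerWeight, dasguptaCost, hdiag]
  | ClusterTree.node L R, hnd, hrec => by
      obtain ⟨hcut, hrecL, hrecR⟩ := hrec
      obtain ⟨hndL, hndR, hd⟩ := nodup_node hnd
      have IH1 := cost_lower w hsym hnonneg hdiag ε hε L hndL hrecL
      have IH2 := cost_lower w hsym hnonneg hdiag ε hε R hndR hrecR
      set A := L.leaves
      set B := R.leaves
      have hAne : A.Nonempty := ct_leaves_nonempty L
      have hBne : B.Nonempty := ct_leaves_nonempty R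
      set a : ℝ := (A.card : ℝ)
      set b : ℝ := (B.card : ℝ)
      set c : ℝ := cutWeight w A B with hc_def
      set iA : ℝ := innerWeight w A
      set iB : ℝ := innerWeight w B
      have K1 : b * iA ≤ (a - 1) * (1 + ε) * c :=
        key_ineq w hsym hnonneg hdiag ε hε A B hAne hBne hd hcut
      have K2 : a * iB ≤ (b - 1) * (1 + ε) * c := by
        have := key_ineq w hsym hnonneg hdiag ε hε B A hBne hAne hd.symm
          (ldc_symm w hsym hcut)
        rwa [cutWeight_comm w hsym B A] at this
      have hcard : ((ClusterTree.node L R).leaves.card : ℝ) = a + b := by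
        rw [ct_leaves_node, Finset.card_union_of_disjoint hd]; push_cast; ring
      have hiw : innerWeight w (ClusterTree.node L R).leaves = iA + iB + 2 * c := by
        rw [ct_leaves_node]; exact innerWeight_union w hsym hd
      have ha1 : (1 : ℝ) ≤ a := Nat.one_le_cast.mpr hAne.card_pos
      have hb1 : (1 : ℝ) ≤ b := Nat.one_le_cast.mpr hBne.card_pos
      have hc0 : 0 ≤ c := cutWeight_nonneg w hnonneg A B
      have hiA0 : 0 ≤ iA := innerWeight_nonneg w hnonneg A
      have hiB0 : 0 ≤ iB := innerWeight_nonneg w hnonneg B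
      have hmid : (1 - ε) / 3 * (b * iA + a * iB + 2 * (a + b) * c) ≤ (a + b) * c := by
        rcases le_or_gt 1 ε with hε1 | hε1
        · have hX : 0 ≤ b * iA + a * iB + 2 * (a + b) * c := by
            nlinarith [mul_nonneg (by linarith : (0:ℝ) ≤ b) hiA0,
              mul_nonneg (by linarith : (0:ℝ) ≤ a) hiB0]
          nlinarith
        · have h1ε : (0 : ℝ) < 1 - ε := by linarith
          have K1' : (1 - ε) * (b * iA) ≤ (1 - ε) * ((a - 1) * (1 + ε) * c) :=
            mul_le_mul_of_nonneg_left K1 h1ε.le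
          have K2' : (1 - ε) * (a * iB) ≤ (1 - ε) * ((b - 1) * (1 + ε) * c) :=
            mul_le_mul_of_nonneg_left K2 h1ε.le
          nlinarith [mul_nonneg hc0 (by linarith : (0:ℝ) ≤ a + b - 2),
            mul_nonneg (mul_nonneg hc0 (by linarith : (0:ℝ) ≤ a + b - 2))
              (sq_nonneg ε), mul_nonneg hc0 (by nlinarith : (0:ℝ) ≤ ε * (a + b)),
            mul_nonneg hε.le hc0]
      simp only [dasguptaCost]
      rw [hcard, hiw]
      have hexp : (1 - ε) / 3 * (a + b) * (iA + iB + 2 * c)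
          = (1 - ε) / 3 * a * iA + (1 - ε) / 3 * b * iB
            + (1 - ε) / 3 * (b * iA + a * iB + 2 * (a + b) * c) := by ring
      have hcast : (((L.leaves.card + R.leaves.card : ℕ)) : ℝ) = a + b := by push_cast; rfl
      rw [hcast, hexp]
      linarith [IH1, IH2, hmid]

end Statement7Aux

/-- Theorem 6, CKMM: the recursive locally-densest-cut algorithm
returns a tree of value at least `(2n/3)(1−ε) Σ_e w(e) ≥ (2/3)(1−ε) OPT`. -/
theorem statement7 {V : Type} [Fintype V] [DecidableEq V] (w : V → V → ℝ)
    (hsym : ∀ u v, w u v = w v u) (hnonneg : ∀ u v, 0 ≤ w u v) (hdiag : ∀ v, w v v = 0)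
    (ε : ℝ) (hε : 0 < ε)
    (T : ClusterTree V) (hT : IsClusterTree T)
    (hrec : IsRecLocallyDensestCutTree w ε T) :
    2 * (Fintype.card V : ℝ) / 3 * (1 - ε) * totalWeight w ≤ dasguptaCost w T ∧
    ∀ T' : ClusterTree V, IsClusterTree T' →
      2 / 3 * (1 - ε) * dasguptaCost w T' ≤ dasguptaCost w T := by
  obtain ⟨hndT, hlvT⟩ := hT
  have hcardT : ((T.leaves.card : ℕ) : ℝ) = (Fintype.card V : ℝ) := by
    rw [hlvT, Finset.card_univ]
  have htw : totalWeight w = innerWeight w T.leaves / 2 := by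
    rw [hlvT]; rfl
  have hlow := cost_lower w hsym hnonneg hdiag ε hε T hndT hrec
  have hfirst : 2 * (Fintype.card V : ℝ) / 3 * (1 - ε) * totalWeight w
      ≤ dasguptaCost w T := by
    rw [htw, ← hcardT]
    calc 2 * ((T.leaves.card : ℕ) : ℝ) / 3 * (1 - ε) * (innerWeight w T.leaves / 2)
        = (1 - ε) / 3 * (T.leaves.card : ℝ) * innerWeight w T.leaves := by ring
      _ ≤ dasguptaCost w T := hlow
  refine ⟨hfirst, fun T' hT' => ?_⟩
  obtain ⟨hndT', hlvT'⟩ := hT'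
  have hup := cost_upper w hsym hnonneg T' hndT'
  have hiw0 : 0 ≤ innerWeight w T'.leaves := innerWeight_nonneg w hnonneg T'.leaves
  rcases le_or_gt 1 ε with hε1 | hε1
  · have h1 : 2 / 3 * (1 - ε) * dasguptaCost w T' ≤ 0 := by
      have := cost_nonneg w hnonneg T'
      nlinarith
    exact h1.trans (cost_nonneg w hnonneg T)
  · have h1ε : (0 : ℝ) ≤ 1 - ε := by linarith
    have hlv : T'.leaves = T.leaves := by rw [hlvT, hlvT']
    have hb : dasguptaCost w T' ≤ (T.leaves.card : ℝ) * innerWeight w T.leaves / 2 := by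
      rw [← hlv]; exact hup
    have h2 : 2 / 3 * (1 - ε) * dasguptaCost w T'
        ≤ 2 / 3 * (1 - ε) * ((T.leaves.card : ℝ) * innerWeight w T.leaves / 2) :=
      mul_le_mul_of_nonneg_left hb (by linarith)
    calc 2 / 3 * (1 - ε) * dasguptaCost w T'
        ≤ 2 / 3 * (1 - ε) * ((T.leaves.card : ℝ) * innerWeight w T.leaves / 2) := h2
      _ = (1 - ε) / 3 * (T.leaves.card : ℝ) * innerWeight w T.leaves := by ring
      _ ≤ dasguptaCost w T := hlow
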